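/- (Policy gradient formula) Suppose f is differentiable on (0,∞). Then the map θ ↦ Ṽ_λ^{π_θ}(u) from ℝ^{S×A} to ℝ is differentiable, and for every s ∈ S and a ∈ A its partial derivative is ∂Ṽ_λ^{π_θ}(u)/∂θ_{sa} = (d_u^{π_θ}(s)/(1−γ)) · π_θ(a|s) · [ Ã_λ^{π_θ}(s,a) − λ ( f'(w_{sa}) − ∑_{a'} π_θ(a'|s) f'(w_{sa'}) ) ], where w_{sa} := π_θ(a|s)/π_ref(a|s). -/

import Mathlib

set_option linter.unusedSectionVars false
set_option maxHeartbeats 1000000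


open Finset

/-- The softmax policy `π_θ(a|s) = exp(θ_{sa})/∑_{a'} exp(θ_{sa'})`. -/
noncomputable def softmaxPolicy {S A : Type*} [Fintype A]
    (θ : S × A → ℝ) (s : S) (a : A) : ℝ :=
  Real.exp (θ (s, a)) / ∑ a' : A, Real.exp (θ (s, a'))

/-- The `f`-divergence `D_f(p,q) := ∑_a q(a) f(p(a)/q(a))` of two probability vectors. -/
noncomputable def fDiv {A : Type*} [Fintype A] (f : ℝ → ℝ) (p q : A → ℝ) : ℝ :=
  ∑ a : A, q a * f (p a / q a)

/-- `π` is a policy: each `π(·|s)` is a strictly positive probability distribution on `A`. -/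
def IsPolicy {S A : Type*} [Fintype A] (π : S → A → ℝ) : Prop :=
  (∀ s a, 0 < π s a) ∧ ∀ s, ∑ a : A, π s a = 1

/-- `V` satisfies the Bellman equation of the `f`-divergence regularized value function
`Ṽ_λ^π`. -/
def IsRegValue {S A : Type*} [Fintype S] [Fintype A]
    (P : S → A → S → ℝ) (r : S → A → ℝ) (γ lam : ℝ) (f : ℝ → ℝ)
    (πref π : S → A → ℝ) (V : S → ℝ) : Prop :=
  ∀ s, V s = (∑ a : A, π s a * (r s a + γ * ∑ s' : S, P s a s' * V s')) -
      lam * fDiv f (π s) (πref s)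

/-- The regularized Q-function `Q̃_λ^π`. -/
noncomputable def Qreg {S A : Type*} [Fintype S] [Fintype A]
    (P : S → A → S → ℝ) (r : S → A → ℝ) (γ lam : ℝ) (f : ℝ → ℝ)
    (πref π : S → A → ℝ) (V : S → ℝ) (s : S) (a : A) : ℝ :=
  r s a - lam * fDiv f (π s) (πref s) + γ * ∑ s' : S, P s a s' * V s'

/-- `d` is the discounted state-visitation distribution `d_μ^π`. -/
def IsVisitation {S A : Type*} [Fintype S] [Fintype A]
    (P : S → A → S → ℝ) (γ : ℝ) (π : S → A → ℝ) (μ d : S → ℝ) : Prop :=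
  ∀ s, d s = (1 - γ) * μ s + γ * ∑ s' : S, d s' * ∑ a : A, π s' a * P s' a s

section aux

variable {S A : Type*} [Fintype S] [Fintype A] [Nonempty A] [DecidableEq S] [DecidableEq A]

local notation "E" => EuclideanSpace ℝ (S × A)

lemma pg_sum_exp_pos (θ : S × A → ℝ) (s : S) : 0 < ∑ a' : A, Real.exp (θ (s, a')) :=
  Finset.sum_pos (fun _ _ => Real.exp_pos _) Finset.univ_nonempty

lemma pg_pos (θ : S × A → ℝ) (s : S) (a : A) : 0 < softmaxPolicy θ s a :=
  div_pos (Real.exp_pos _) (pg_sum_exp_pos θ s)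

lemma pg_sum_one (θ : S × A → ℝ) (s : S) : ∑ a : A, softmaxPolicy θ s a = 1 := by
  unfold softmaxPolicy
  rw [← Finset.sum_div, div_self (pg_sum_exp_pos θ s).ne']

lemma pg_policy (θ : S × A → ℝ) : IsPolicy (softmaxPolicy θ) :=
  ⟨pg_pos θ, pg_sum_one θ⟩

/-- Differentiability of softmax in `θ`. -/
lemma pg_diff (s : S) (a : A) :
    Differentiable ℝ (fun θ : E => softmaxPolicy θ s a) := by
  have h1 : ∀ b : A, Differentiable ℝ (fun θ : E => Real.exp (θ (s, b))) := fun b =>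
    Real.differentiable_exp.comp (EuclideanSpace.proj (𝕜 := ℝ) ((s, b) : S × A)).differentiable
  have h2 : Differentiable ℝ (fun θ : E => (∑ a' : A, Real.exp (θ (s, a')))⁻¹) :=
    (Differentiable.fun_sum fun b _ => h1 b).inv (fun θ => (pg_sum_exp_pos θ s).ne')
  simpa [softmaxPolicy, div_eq_mul_inv] using (h1 a).fun_mul h2

/-- Derivative of softmax along the coordinate path. -/
lemma pg_deriv_path (θ : E) (s : S) (a : A) (s' : S) (a' : A) :
    HasDerivAt (fun t : ℝ => softmaxPolicy (θ + t • EuclideanSpace.single (s, a) (1 : ℝ)) s' a')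
      (if s' = s then softmaxPolicy θ s a' * ((if a' = a then 1 else 0) - softmaxPolicy θ s a)
       else 0) 0 := by
  set c : A → ℝ := fun b => if s' = s ∧ b = a then 1 else 0 with hc
  have key : ∀ b : A, ∀ t : ℝ,
      (θ + t • EuclideanSpace.single (s, a) (1 : ℝ)) (s', b) = θ (s', b) + t * c b := by
    intro b t
    have h : (EuclideanSpace.single (s, a) (1 : ℝ)) (s', b) = c b := by
      rw [EuclideanSpace.single_apply]
      by_cases h1 : s' = s <;> by_cases h2 : b = a <;> simp [hc, h1, h2, Prod.ext_iff]
    calc (θ + t • EuclideanSpace.single (s, a) (1 : ℝ)) (s', b)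
        = θ (s', b) + t * (EuclideanSpace.single (s, a) (1 : ℝ)) (s', b) := rfl
      _ = _ := by rw [h]
  have hN : ∀ b : A, HasDerivAt (fun t : ℝ => Real.exp (θ (s', b) + t * c b))
      (Real.exp (θ (s', b)) * c b) 0 := by
    intro b
    have hlin : HasDerivAt (fun t : ℝ => θ (s', b) + t * c b) (c b) 0 := by
      simpa using ((hasDerivAt_id (0:ℝ)).mul_const (c b)).const_add (θ (s', b))
    simpa using hlin.exp
  have hD : HasDerivAt (fun t : ℝ => ∑ b : A, Real.exp (θ (s', b) + t * c b))
      (∑ b : A, Real.exp (θ (s', b)) * c b) 0 := HasDerivAt.fun_sum fun b _ => hN b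
  have hD0 : (∑ b : A, Real.exp (θ (s', b) + (0:ℝ) * c b)) = ∑ b : A, Real.exp (θ (s', b)) := by
    simp
  have hdiv := (hN a').fun_div hD (by rw [hD0]; exact (pg_sum_exp_pos θ s').ne')
  have hfun : (fun t : ℝ => Real.exp (θ (s', a') + t * c a') /
      ∑ b : A, Real.exp (θ (s', b) + t * c b)) =
      (fun t : ℝ => softmaxPolicy (θ + t • EuclideanSpace.single (s, a) (1 : ℝ)) s' a') := by
    funext t
    simp only [softmaxPolicy, key]
  rw [hfun] at hdiv
  refine hdiv.congr_deriv ?_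
  symm
  rw [hD0]
  simp only [softmaxPolicy]
  set Sg : ℝ := ∑ b : A, Real.exp (θ (s', b)) with hSg
  have hSgpos : 0 < Sg := pg_sum_exp_pos θ s'
  by_cases h1 : s' = s
  · subst h1
    have hsum : (∑ b : A, Real.exp (θ (s', b)) * c b) = Real.exp (θ (s', a)) := by
      simp [hc]
    rw [hsum]
    by_cases h2 : a' = a <;> simp [hc, h2] <;> field_simp <;> ring
  · have hsum : (∑ b : A, Real.exp (θ (s', b)) * c b) = 0 := by
      simp [hc, h1]
    rw [hsum]
    simp [hc, h1]

variable {f : ℝ → ℝ} {πref : S → A → ℝ}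

/-- Differentiability of the `f`-divergence term. -/
lemma pg_fdiv_diff (hfdiff : ∀ x ∈ Set.Ioi (0 : ℝ), DifferentiableAt ℝ f x)
    (hπref : IsPolicy πref) (s : S) :
    Differentiable ℝ (fun θ : E => fDiv f (softmaxPolicy θ s) (πref s)) := by
  unfold fDiv
  refine Differentiable.fun_sum fun b _ => Differentiable.const_mul ?_ _
  intro θ
  have hw : softmaxPolicy θ s b / πref s b ∈ Set.Ioi (0:ℝ) :=
    div_pos (pg_pos θ s b) (hπref.1 s b)
  have hdc : DifferentiableAt ℝ (fun θ : EuclideanSpace ℝ (S × A) =>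
      softmaxPolicy θ s b / πref s b) θ := by
    have := (pg_diff s b) θ
    simp only [div_eq_mul_inv]
    exact this.mul_const ((πref s b)⁻¹)
  exact (hfdiff _ hw).comp θ hdc

/-- Derivative of the `f`-divergence term along the coordinate path. -/
lemma pg_fdiv_deriv_path (hfdiff : ∀ x ∈ Set.Ioi (0 : ℝ), DifferentiableAt ℝ f x)
    (hπref : IsPolicy πref) (θ : E) (s : S) (a : A) (s' : S) :
    HasDerivAt (fun t : ℝ =>
        fDiv f (softmaxPolicy (θ + t • EuclideanSpace.single (s, a) (1 : ℝ)) s') (πref s'))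
      (∑ b : A, deriv f (softmaxPolicy θ s' b / πref s' b) *
        (if s' = s then softmaxPolicy θ s b * ((if b = a then 1 else 0) - softmaxPolicy θ s a)
         else 0)) 0 := by
  have h0 : θ + (0:ℝ) • EuclideanSpace.single (s, a) (1 : ℝ) = θ := by simp
  unfold fDiv
  have hterm : ∀ b : A, HasDerivAt (fun t : ℝ =>
      πref s' b * f (softmaxPolicy (θ + t • EuclideanSpace.single (s, a) (1 : ℝ)) s' b / πref s' b))
      (deriv f (softmaxPolicy θ s' b / πref s' b) *
        (if s' = s then softmaxPolicy θ s b * ((if b = a then 1 else 0) - softmaxPolicy θ s a)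
         else 0)) 0 := by
    intro b
    have hinner : HasDerivAt (fun t : ℝ =>
        softmaxPolicy (θ + t • EuclideanSpace.single (s, a) (1 : ℝ)) s' b / πref s' b)
        ((if s' = s then softmaxPolicy θ s b * ((if b = a then 1 else 0) - softmaxPolicy θ s a)
          else 0) / πref s' b) 0 := (pg_deriv_path θ s a s' b).div_const _
    have hw : (0:ℝ) < softmaxPolicy θ s' b / πref s' b :=
      div_pos (pg_pos θ s' b) (hπref.1 s' b)
    have hf' : HasDerivAt f (deriv f (softmaxPolicy θ s' b / πref s' b))
        (softmaxPolicy θ s' b / πref s' b) := (hfdiff _ hw).hasDerivAt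
    have hf'' : HasDerivAt f (deriv f (softmaxPolicy θ s' b / πref s' b))
        ((fun t : ℝ => softmaxPolicy (θ + t • EuclideanSpace.single (s, a) (1 : ℝ)) s' b /
          πref s' b) 0) := by
      simpa [h0] using hf'
    have hcomp := hf''.comp (0:ℝ) hinner
    have := hcomp.const_mul (πref s' b)
    refine this.congr_deriv ?_
    symm
    have : πref s' b ≠ 0 := (hπref.1 s' b).ne'
    field_simp
  exact HasDerivAt.fun_sum fun b _ => hterm b

end aux

section mat

open Matrix

variable {S A : Type*} [Fintype S] [Fintype A] [Nonempty A] [DecidableEq S] [DecidableEq A]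

local notation "E" => EuclideanSpace ℝ (S × A)

/-- The matrix `I - γ P_π`. -/
noncomputable def pgMat (P : S → A → S → ℝ) (γ : ℝ) (π : S → A → ℝ) : Matrix S S ℝ :=
  Matrix.of fun s s' => (if s = s' then 1 else 0) - γ * ∑ a : A, π s a * P s a s'

/-- The reward vector `R_π`. -/
noncomputable def pgVecR (r : S → A → ℝ) (lam : ℝ) (f : ℝ → ℝ)
    (πref π : S → A → ℝ) : S → ℝ :=
  fun s => (∑ a : A, π s a * r s a) - lam * fDiv f (π s) (πref s)

lemma pgMat_mulVec {P : S → A → S → ℝ} {r : S → A → ℝ} {γ lam : ℝ} {f : ℝ → ℝ}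
    {πref π : S → A → ℝ} {V : S → ℝ} (hV : IsRegValue P r γ lam f πref π V) :
    (pgMat P γ π) *ᵥ V = pgVecR r lam f πref π := by
  funext s
  have hswap : ∑ s' : S, (∑ a : A, π s a * P s a s') * V s'
      = ∑ a : A, π s a * ∑ s' : S, P s a s' * V s' := by
    simp only [Finset.sum_mul, Finset.mul_sum]
    rw [Finset.sum_comm]
    congr 1; funext a; congr 1; funext s'; ring
  have hbell := hV s
  simp only [Matrix.mulVec, dotProduct, pgMat, Matrix.of_apply, pgVecR]
  have : ∑ s' : S, ((if s = s' then 1 else 0) - γ * ∑ a : A, π s a * P s a s') * V s'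
      = V s - γ * ∑ s' : S, (∑ a : A, π s a * P s a s') * V s' := by
    rw [show ∀ x : S → ℝ, ∑ s' : S, ((if s = s' then 1 else 0) - γ * ∑ a : A, π s a * P s a s') * x s'
        = ∑ s' : S, ((if s = s' then 1 else 0) * x s' - γ * ((∑ a : A, π s a * P s a s') * x s'))
      from fun x => Finset.sum_congr rfl fun s' _ => by ring]
    rw [Finset.sum_sub_distrib, ← Finset.mul_sum]
    congr 1
    simp
  rw [this, hswap]
  rw [hbell]
  have : ∑ a : A, π s a * (r s a + γ * ∑ s' : S, P s a s' * V s')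
      = (∑ a : A, π s a * r s a) + γ * ∑ a : A, π s a * ∑ s' : S, P s a s' * V s' := by
    rw [Finset.mul_sum, ← Finset.sum_add_distrib]
    congr 1; funext a; ring
  rw [this]
  ring

lemma pgMat_det_ne_zero {P : S → A → S → ℝ} (hP : ∀ s a, (∀ s', 0 ≤ P s a s') ∧ ∑ s' : S, P s a s' = 1)
    {γ : ℝ} (hγ0 : 0 ≤ γ) (hγ1 : γ < 1) {π : S → A → ℝ} (hπ : IsPolicy π) :
    (pgMat P γ π).det ≠ 0 := by
  set q : S → S → ℝ := fun s s' => ∑ a : A, π s a * P s a s' with hq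
  have hq0 : ∀ s s', 0 ≤ q s s' := fun s s' =>
    Finset.sum_nonneg fun a _ => mul_nonneg (hπ.1 s a).le ((hP s a).1 s')
  have hq1 : ∀ s, ∑ s' : S, q s s' = 1 := by
    intro s
    rw [hq]
    simp only
    rw [Finset.sum_comm]
    calc ∑ a : A, ∑ s' : S, π s a * P s a s'
        = ∑ a : A, π s a * ∑ s' : S, P s a s' := by
          congr 1; funext a; rw [Finset.mul_sum]
      _ = ∑ a : A, π s a := by
          congr 1; funext a; rw [(hP s a).2, mul_one]
      _ = 1 := hπ.2 s
  have hqle : ∀ s s', q s s' ≤ 1 := by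
    intro s s'
    calc q s s' ≤ ∑ t : S, q s t :=
          Finset.single_le_sum (fun t _ => hq0 s t) (Finset.mem_univ s')
      _ = 1 := hq1 s
  apply det_ne_zero_of_sum_row_lt_diag
  intro k
  have hdiag : pgMat P γ π k k = 1 - γ * q k k := by simp [pgMat, hq]
  have hγq : γ * q k k < 1 := lt_of_le_of_lt
    (mul_le_of_le_one_right hγ0 (hqle k k)) hγ1
  have hnd : ∀ j, j ≠ k → ‖pgMat P γ π k j‖ = γ * q k j := by
    intro j hj
    have : pgMat P γ π k j = -(γ * q k j) := by simp [pgMat, Ne.symm hj, hq]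
    rw [this, norm_neg, Real.norm_eq_abs, abs_of_nonneg (mul_nonneg hγ0 (hq0 k j))]
  calc ∑ j ∈ Finset.univ.erase k, ‖pgMat P γ π k j‖
      = ∑ j ∈ Finset.univ.erase k, γ * q k j := by
        refine Finset.sum_congr rfl fun j hj => hnd j (Finset.mem_erase.1 hj).1
    _ = γ * ∑ j ∈ Finset.univ.erase k, q k j := by rw [Finset.mul_sum]
    _ = γ * (1 - q k k) := by
        rw [Finset.sum_erase_eq_sub (Finset.mem_univ k), hq1 k]
    _ < 1 - γ * q k k := by nlinarith [hq0 k k, hqle k k]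
    _ = ‖pgMat P γ π k k‖ := by
        rw [hdiag, Real.norm_eq_abs, abs_of_pos (by linarith)]

lemma pg_cramer_eq {M : Matrix S S ℝ} (hdet : M.det ≠ 0) {V R : S → ℝ}
    (hMV : M *ᵥ V = R) : V = fun s => (M.det)⁻¹ * M.cramer R s := by
  have hinj : Function.Injective M.mulVec :=
    Matrix.mulVec_injective_iff_isUnit.2
      ((Matrix.isUnit_iff_isUnit_det M).2 (isUnit_iff_ne_zero.2 hdet))
  apply hinj
  rw [hMV]
  have : (fun s => (M.det)⁻¹ * M.cramer R s) = (M.det)⁻¹ • M.cramer R := rfl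
  rw [this, Matrix.mulVec_smul, Matrix.mulVec_cramer M R]
  funext s
  simp only [Pi.smul_apply, smul_eq_mul]
  rw [← mul_assoc, inv_mul_cancel₀ hdet, one_mul]

/-- Determinant of an entrywise-differentiable matrix family is differentiable. -/
lemma pg_det_diff {X : E → Matrix S S ℝ}
    (h : ∀ i j, Differentiable ℝ (fun θ : E => X θ i j)) :
    Differentiable ℝ (fun θ : E => (X θ).det) := by
  have : (fun θ : E => (X θ).det)
      = fun θ : E => ∑ σ : Equiv.Perm S, ((Equiv.Perm.sign σ : ℤ) : ℝ) * ∏ i : S, X θ (σ i) i := by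
    funext θ; rw [Matrix.det_apply']
  rw [this]
  refine Differentiable.fun_sum fun σ _ => Differentiable.const_mul ?_ _
  classical
  have : ∀ (u : Finset S), Differentiable ℝ (fun θ : E => ∏ i ∈ u, X θ (σ i) i) := by
    intro u
    induction u using Finset.induction with
    | empty => simpa using differentiable_const (1:ℝ)
    | insert j u' hni ih =>
      have : (fun θ : E => ∏ i ∈ insert j u', X θ (σ i) i)
          = fun θ : E => X θ (σ j) j * ∏ i ∈ u', X θ (σ i) i := by
        funext θ; rw [Finset.prod_insert hni]
      rw [this]
      exact (h (σ j) j).mul ih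
  exact this Finset.univ

end mat

section vdiff

open Matrix

variable {S A : Type*} [Fintype S] [Fintype A] [Nonempty A] [DecidableEq S] [DecidableEq A]

local notation "E" => EuclideanSpace ℝ (S × A)

lemma pg_entry_diff (P : S → A → S → ℝ) (γ : ℝ) (s s' : S) :
    Differentiable ℝ (fun θ : E => pgMat P γ (softmaxPolicy θ) s s') := by
  simp only [pgMat, Matrix.of_apply]
  exact (differentiable_const _).sub
    ((Differentiable.fun_sum fun a _ => (pg_diff s a).mul_const _).const_mul _)

lemma pg_R_diff {f : ℝ → ℝ} (hfdiff : ∀ x ∈ Set.Ioi (0 : ℝ), DifferentiableAt ℝ f x)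
    {πref : S → A → ℝ} (hπref : IsPolicy πref) (r : S → A → ℝ) (lam : ℝ) (s : S) :
    Differentiable ℝ (fun θ : E => pgVecR r lam f πref (softmaxPolicy θ) s) := by
  simp only [pgVecR]
  exact (Differentiable.fun_sum fun a _ => (pg_diff s a).mul_const _).sub
    ((pg_fdiv_diff hfdiff hπref s).const_mul _)

lemma pg_V_diff {P : S → A → S → ℝ}
    (hP : ∀ s a, (∀ s', 0 ≤ P s a s') ∧ ∑ s' : S, P s a s' = 1)
    {γ : ℝ} (hγ0 : 0 ≤ γ) (hγ1 : γ < 1)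
    {f : ℝ → ℝ} (hfdiff : ∀ x ∈ Set.Ioi (0 : ℝ), DifferentiableAt ℝ f x)
    {πref : S → A → ℝ} (hπref : IsPolicy πref) {r : S → A → ℝ} {lam : ℝ}
    {V : E → S → ℝ}
    (hV : ∀ θ : E, IsRegValue P r γ lam f πref (softmaxPolicy θ) (V θ)) (s : S) :
    Differentiable ℝ (fun θ : E => V θ s) := by
  have hdet : ∀ θ : E, (pgMat P γ (softmaxPolicy θ)).det ≠ 0 := fun θ =>
    pgMat_det_ne_zero hP hγ0 hγ1 (pg_policy θ)
  have hVeq : (fun θ : E => V θ s) = fun θ : E =>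
      ((pgMat P γ (softmaxPolicy θ)).det)⁻¹ *
        (pgMat P γ (softmaxPolicy θ)).cramer (pgVecR r lam f πref (softmaxPolicy θ)) s := by
    funext θ
    exact congrFun (pg_cramer_eq (hdet θ) (pgMat_mulVec (hV θ))) s
  rw [hVeq]
  have hcr : Differentiable ℝ (fun θ : E =>
      (pgMat P γ (softmaxPolicy θ)).cramer (pgVecR r lam f πref (softmaxPolicy θ)) s) := by
    have : (fun θ : E =>
        (pgMat P γ (softmaxPolicy θ)).cramer (pgVecR r lam f πref (softmaxPolicy θ)) s)
        = fun θ : E => ((pgMat P γ (softmaxPolicy θ)).updateCol s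
            (pgVecR r lam f πref (softmaxPolicy θ))).det := by
      funext θ; rw [Matrix.cramer_apply]
    rw [this]
    refine pg_det_diff fun i j => ?_
    simp only [Matrix.updateCol_apply]
    by_cases hj : j = s
    · simpa [hj] using pg_R_diff hfdiff hπref r lam i
    · simpa [hj] using pg_entry_diff P γ i j
  exact ((pg_det_diff fun i j => pg_entry_diff P γ i j).inv hdet).mul hcr

end vdiff

section path

variable {S A : Type*} [Fintype S] [Fintype A] [Nonempty A] [DecidableEq S] [DecidableEq A]

local notation "E" => EuclideanSpace ℝ (S × A)

lemma pg_path_hasDerivAt {φ : E → ℝ} {θ : E} (hφ : DifferentiableAt ℝ φ θ) (e : E) :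
    HasDerivAt (fun t : ℝ => φ (θ + t • e)) (fderiv ℝ φ θ e) 0 := by
  have hg : HasDerivAt (fun t : ℝ => θ + t • e) e 0 := by
    simpa using ((hasDerivAt_id (0:ℝ)).smul_const e).const_add θ
  have hf : HasFDerivAt φ (fderiv ℝ φ θ) ((fun t : ℝ => θ + t • e) 0) := by
    show HasFDerivAt φ (fderiv ℝ φ θ) (θ + (0:ℝ) • e)
    have h0 : θ + (0:ℝ) • e = θ := by simp
    rw [h0]
    exact hφ.hasFDerivAt
  exact hf.comp_hasDerivAt 0 hg

end path

/-- (Policy gradient formula) Suppose `f` is differentiable on `(0,∞)`.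
Then `θ ↦ Ṽ_λ^{π_θ}(u)` is differentiable and its partial derivative in the `(s,a)`
coordinate is `(d_u^{π_θ}(s)/(1−γ)) π_θ(a|s) [Ã_λ^{π_θ}(s,a) −
λ(f'(w_{sa}) − ∑_{a'} π_θ(a'|s) f'(w_{sa'}))]`, where `w_{sa} = π_θ(a|s)/π_ref(a|s)`. -/
theorem policy_gradient_formula
    {S A : Type*} [Fintype S] [Fintype A] [Nonempty S] [Nonempty A]
    [DecidableEq S] [DecidableEq A]
    (P : S → A → S → ℝ) (hP : ∀ s a, (∀ s', 0 ≤ P s a s') ∧ ∑ s' : S, P s a s' = 1)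
    (r : S → A → ℝ) (rmax : ℝ) (hr : ∀ s a, 0 ≤ r s a ∧ r s a ≤ rmax)
    (γ : ℝ) (hγ0 : 0 ≤ γ) (hγ1 : γ < 1)
    (πref : S → A → ℝ) (hπref : IsPolicy πref)
    (f : ℝ → ℝ) (hfconv : ConvexOn ℝ (Set.Ioi 0) f) (hf1 : f 1 = 0)
    (hfdiff : ∀ x ∈ Set.Ioi (0 : ℝ), DifferentiableAt ℝ f x)
    (lam : ℝ) (hlam : 0 < lam)
    (u : S → ℝ) (hu : (∀ s, 0 ≤ u s) ∧ ∑ s : S, u s = 1)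
    (V : EuclideanSpace ℝ (S × A) → S → ℝ)
    (hV : ∀ θ, IsRegValue P r γ lam f πref (softmaxPolicy θ) (V (WithLp.toLp 2 θ)))
    (d : EuclideanSpace ℝ (S × A) → S → ℝ)
    (hd : ∀ θ, IsVisitation P γ (softmaxPolicy θ) u (d (WithLp.toLp 2 θ))) :
    Differentiable ℝ (fun θ : EuclideanSpace ℝ (S × A) => ∑ s : S, u s * V θ s) ∧
    ∀ (θ : EuclideanSpace ℝ (S × A)) (s : S) (a : A),
      fderiv ℝ (fun θ' : EuclideanSpace ℝ (S × A) => ∑ s' : S, u s' * V θ' s') θ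
          (EuclideanSpace.single (s, a) (1 : ℝ)) =
        d θ s / (1 - γ) * softmaxPolicy θ s a *
          ((Qreg P r γ lam f πref (softmaxPolicy θ) (V θ) s a - V θ s) -
            lam * (deriv f (softmaxPolicy θ s a / πref s a) -
              ∑ a' : A, softmaxPolicy θ s a' *
                deriv f (softmaxPolicy θ s a' / πref s a'))) := by
  have hVd : ∀ s' : S, Differentiable ℝ (fun θ : EuclideanSpace ℝ (S × A) => V θ s') :=
    pg_V_diff hP hγ0 hγ1 hfdiff hπref (fun θ => hV θ)
  have hFd : Differentiable ℝ
      (fun θ : EuclideanSpace ℝ (S × A) => ∑ s : S, u s * V θ s) :=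
    Differentiable.fun_sum fun s' _ => (hVd s').const_mul (u s')
  refine ⟨hFd, ?_⟩
  intro θ s a
  set e : EuclideanSpace ℝ (S × A) := EuclideanSpace.single (s, a) (1 : ℝ) with he
  -- the directional derivatives of the value function
  set Dv : S → ℝ := fun s' =>
    fderiv ℝ (fun θ' : EuclideanSpace ℝ (S × A) => V θ' s') θ e with hDvdef
  have hDv : ∀ s' : S, HasDerivAt (fun t : ℝ => V (θ + t • e) s') (Dv s') 0 := fun s' =>
    pg_path_hasDerivAt ((hVd s') θ) e
  -- the directional derivative of the objective equals ∑ u ⬝ Dv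
  have hobj : fderiv ℝ (fun θ' : EuclideanSpace ℝ (S × A) => ∑ s' : S, u s' * V θ' s') θ e
      = ∑ s' : S, u s' * Dv s' := by
    have h1 : HasDerivAt (fun t : ℝ => ∑ s' : S, u s' * V (θ + t • e) s')
        (fderiv ℝ (fun θ' : EuclideanSpace ℝ (S × A) => ∑ s' : S, u s' * V θ' s') θ e) 0 :=
      pg_path_hasDerivAt (hFd θ) e
    have h2 : HasDerivAt (fun t : ℝ => ∑ s' : S, u s' * V (θ + t • e) s')
        (∑ s' : S, u s' * Dv s') 0 :=
      HasDerivAt.fun_sum fun s' _ => (hDv s').const_mul (u s')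
    exact h1.unique h2
  -- softmax path derivative
  set D : S → A → ℝ := fun s' a' =>
    if s' = s then softmaxPolicy θ s a' * ((if a' = a then 1 else 0) - softmaxPolicy θ s a)
    else 0 with hDdef
  -- the (unregularized) Q-values
  set q : S → A → ℝ := fun s' a' => r s' a' + γ * ∑ s'' : S, P s' a' s'' * V θ s'' with hqdef
  set K : S → ℝ := fun s' =>
    ∑ a' : A, D s' a' * (q s' a' - lam * deriv f (softmaxPolicy θ s' a' / πref s' a'))
    with hKdef
  -- differentiate the Bellman equation along the path
  have key1 : ∀ s' : S, Dv s' =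
      K s' + γ * ∑ s'' : S, (∑ a' : A, softmaxPolicy θ s' a' * P s' a' s'') * Dv s'' := by
    intro s'
    have h0e : θ + (0:ℝ) • e = θ := by simp
    -- the function along the path, rewritten via the Bellman equation
    have hfun : (fun t : ℝ => V (θ + t • e) s') = fun t : ℝ =>
        (∑ a' : A, softmaxPolicy (θ + t • e) s' a' *
          (r s' a' + γ * ∑ s'' : S, P s' a' s'' * V (θ + t • e) s''))
        - lam * fDiv f (softmaxPolicy (θ + t • e) s') (πref s') :=
      funext fun t => hV (θ + t • e) s'
    -- derivative of each product term
    have hprod : ∀ a' : A, HasDerivAt (fun t : ℝ => softmaxPolicy (θ + t • e) s' a' *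
        (r s' a' + γ * ∑ s'' : S, P s' a' s'' * V (θ + t • e) s''))
        (D s' a' * q s' a' + softmaxPolicy θ s' a' * (γ * ∑ s'' : S, P s' a' s'' * Dv s'')) 0 := by
      intro a'
      have h1 : HasDerivAt (fun t : ℝ => softmaxPolicy (θ + t • e) s' a') (D s' a') 0 := by
        rw [hDdef]
        exact pg_deriv_path θ s a s' a'
      have h2 : HasDerivAt (fun t : ℝ =>
          r s' a' + γ * ∑ s'' : S, P s' a' s'' * V (θ + t • e) s'')
          (γ * ∑ s'' : S, P s' a' s'' * Dv s'') 0 := by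
        have hsum : HasDerivAt (fun t : ℝ => ∑ s'' : S, P s' a' s'' * V (θ + t • e) s'')
            (∑ s'' : S, P s' a' s'' * Dv s'') 0 :=
          HasDerivAt.fun_sum fun s'' _ => (hDv s'').const_mul (P s' a' s'')
        exact (hsum.const_mul γ).const_add (r s' a')
      have hmul := h1.fun_mul h2
      simp only [h0e] at hmul
      convert hmul using 1
    -- derivative of the f-divergence term
    have hfd : HasDerivAt (fun t : ℝ =>
        lam * fDiv f (softmaxPolicy (θ + t • e) s') (πref s'))
        (lam * ∑ b : A, deriv f (softmaxPolicy θ s' b / πref s' b) * D s' b) 0 := by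
      have := (pg_fdiv_deriv_path hfdiff hπref θ s a s').const_mul lam
      rw [he]
      convert this using 2
    -- assemble the right-hand side derivative
    have hrhs : HasDerivAt (fun t : ℝ =>
        (∑ a' : A, softmaxPolicy (θ + t • e) s' a' *
          (r s' a' + γ * ∑ s'' : S, P s' a' s'' * V (θ + t • e) s''))
        - lam * fDiv f (softmaxPolicy (θ + t • e) s') (πref s'))
        ((∑ a' : A, (D s' a' * q s' a' +
            softmaxPolicy θ s' a' * (γ * ∑ s'' : S, P s' a' s'' * Dv s'')))
          - lam * ∑ b : A, deriv f (softmaxPolicy θ s' b / πref s' b) * D s' b) 0 :=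
      (HasDerivAt.fun_sum fun a' _ => hprod a').sub hfd
    have hlhs := hDv s'
    rw [hfun] at hlhs
    have heq := hlhs.unique hrhs
    rw [heq]
    -- algebraic rearrangement
    have hsw : ∑ a' : A, softmaxPolicy θ s' a' * (γ * ∑ s'' : S, P s' a' s'' * Dv s'')
        = γ * ∑ s'' : S, (∑ a' : A, softmaxPolicy θ s' a' * P s' a' s'') * Dv s'' := by
      simp only [Finset.mul_sum, Finset.sum_mul]
      rw [Finset.sum_comm]
      refine Finset.sum_congr rfl fun s'' _ => ?_
      refine Finset.sum_congr rfl fun a' _ => ?_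
      ring
    rw [Finset.sum_add_distrib, hsw]
    have hKalt : K s' = (∑ a' : A, D s' a' * q s' a') -
        lam * ∑ a' : A, deriv f (softmaxPolicy θ s' a' / πref s' a') * D s' a' := by
      rw [hKdef]
      simp only
      rw [Finset.mul_sum, ← Finset.sum_sub_distrib]
      refine Finset.sum_congr rfl fun a' _ => ?_
      ring
    rw [hKalt]
    ring
  -- visitation pairing
  have key2 : (1 - γ) * ∑ s' : S, u s' * Dv s' = ∑ s' : S, d θ s' * K s' := by
    set T : ℝ := ∑ s' : S, ∑ s'' : S,
      d θ s' * ((∑ a' : A, softmaxPolicy θ s' a' * P s' a' s'') * Dv s'') with hT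
    have hS1 : ∑ s' : S, d θ s' * Dv s' = (∑ s' : S, d θ s' * K s') + γ * T := by
      have : ∀ s' : S, d θ s' * Dv s' = d θ s' * K s' +
          γ * ∑ s'' : S, d θ s' * ((∑ a' : A, softmaxPolicy θ s' a' * P s' a' s'') * Dv s'') := by
        intro s'
        rw [key1 s', mul_add]
        congr 1
        rw [← mul_assoc, mul_comm (d θ s') γ, mul_assoc, Finset.mul_sum]
      rw [Finset.sum_congr rfl fun s' _ => this s', Finset.sum_add_distrib, ← Finset.mul_sum]
    have hS2 : ∑ s' : S, d θ s' * Dv s' = (1 - γ) * (∑ s' : S, u s' * Dv s') + γ * T := by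
      have hstep : ∀ s' : S, d θ s' * Dv s' = (1 - γ) * (u s' * Dv s') +
          γ * ∑ s'' : S, d θ s'' * ((∑ a : A, softmaxPolicy θ s'' a * P s'' a s') * Dv s') := by
        intro s'
        rw [hd θ s', add_mul]
        congr 1
        · ring
        · rw [mul_assoc, Finset.sum_mul]
          congr 1
          refine Finset.sum_congr rfl fun s'' _ => ?_
          ring
      rw [Finset.sum_congr rfl fun s' _ => hstep s', Finset.sum_add_distrib, ← Finset.mul_sum,
        ← Finset.mul_sum]
      congr 2
      rw [hT, Finset.sum_comm]
    linarith [hS1, hS2]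
  -- K vanishes off s and at s equals the desired expression
  have hK0 : ∀ s', s' ≠ s → K s' = 0 := by
    intro s' hs'
    simp [hKdef, hDdef, hs']
  have hKs : K s = softmaxPolicy θ s a *
      ((Qreg P r γ lam f πref (softmaxPolicy θ) (V θ) s a - V θ s) -
        lam * (deriv f (softmaxPolicy θ s a / πref s a) -
          ∑ a' : A, softmaxPolicy θ s a' *
            deriv f (softmaxPolicy θ s a' / πref s a'))) := by
    set π' : A → ℝ := softmaxPolicy θ s with hπ'
    set f' : A → ℝ := fun b => deriv f (softmaxPolicy θ s b / πref s b) with hf'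
    have expand : K s = (∑ a' : A, (if a' = a then π' a' * (q s a' - lam * f' a') else 0))
        - π' a * ∑ a' : A, π' a' * (q s a' - lam * f' a') := by
      rw [hKdef]
      simp only [hDdef, if_pos rfl]
      rw [Finset.mul_sum, ← Finset.sum_sub_distrib]
      refine Finset.sum_congr rfl fun a' _ => ?_
      by_cases h : a' = a <;> simp [h] <;> ring
    have hfirst : (∑ a' : A, (if a' = a then π' a' * (q s a' - lam * f' a') else 0))
        = π' a * (q s a - lam * f' a) := by
      rw [Finset.sum_ite_eq' Finset.univ a]
      simp
    have hsumq : ∑ a' : A, π' a' * q s a'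
        = V θ s + lam * fDiv f (softmaxPolicy θ s) (πref s) := by
      have h1 : ∑ a' : A, π' a' * q s a'
          = ∑ a' : A, softmaxPolicy θ s a' *
              (r s a' + γ * ∑ s'' : S, P s a' s'' * V θ s'') := rfl
      rw [h1, hV θ s]
      ring
    have hqa : q s a = Qreg P r γ lam f πref (softmaxPolicy θ) (V θ) s a
        + lam * fDiv f (softmaxPolicy θ s) (πref s) := by
      simp only [hqdef, Qreg]
      ring
    have hsplit : ∑ a' : A, π' a' * (q s a' - lam * f' a')
        = (∑ a' : A, π' a' * q s a') - lam * ∑ a' : A, π' a' * f' a' := by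
      rw [Finset.mul_sum, ← Finset.sum_sub_distrib]
      refine Finset.sum_congr rfl fun a' _ => ?_
      ring
    rw [expand, hfirst, hsplit, hsumq, hqa]
    ring
  -- conclude
  have hsum : ∑ s' : S, d θ s' * K s' = d θ s * K s := by
    rw [Finset.sum_eq_single s]
    · intro s' _ hs'
      rw [hK0 s' hs', mul_zero]
    · intro h; exact absurd (Finset.mem_univ s) h
  rw [hobj]
  have h1γ : (1 - γ) ≠ 0 := by linarith
  have : ∑ s' : S, u s' * Dv s' = d θ s * K s / (1 - γ) := by
    field_simp
    linarith [key2, hsum]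
  rw [this, hKs]
  ring
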